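/- The anchor point ζ = ((1+A)/2, (1−A)/2) belongs to the graph grid: there exists (m,n) ∈ ℤ² with T(m,n) = ((1+A)/2, (1−A)/2). -/

import Mathlib

/-- The linear part of the canonical affine transformation, with parameter `A`. -/
noncomputable def dT (A : ℝ) (v : ℝ × ℝ) : ℝ × ℝ :=
  (((A ^ 2 + A) * v.1 + (A + 1) * v.2) / (A + 1),
   ((-A ^ 2 + 2 * A + 1) * v.1 + (-2 * A) * v.2) / (A + 1))

/-- The canonical affine transformation `T` for the parameter `p/q`,
with `τ` the inverse of `2p` mod `p+q`. -/
noncomputable def Tc (p q τ : ℤ) (v : ℝ × ℝ) : ℝ × ℝ :=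
  dT ((p : ℝ) / (q : ℝ)) v +
    (1 / (2 * (q : ℝ)), -1 / (2 * (q : ℝ)) + 1 / ((p : ℝ) + (q : ℝ)) + (τ : ℝ))

/-- the anchor point `ζ = ((1+A)/2, (1−A)/2)` belongs to the graph grid. -/
theorem stmt9 (p q : ℤ) (hp : 0 < p) (hpq : p < q) (hcop : IsCoprime p q)
    (he : Even (p * q)) (τ : ℤ) (hτ0 : 0 < τ) (hτω : τ < p + q)
    (hτ : (p + q) ∣ (2 * p * τ - 1)) :
    ∃ m n : ℤ,
      Tc p q τ ((m : ℝ), (n : ℝ)) =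
        ((1 + (p : ℝ) / q) / 2, (1 - (p : ℝ) / q) / 2) := by
  obtain ⟨k, hk⟩ := hτ
  have hkodd : Odd k := by
    have hodd : Odd ((p + q) * k) := by
      rw [← hk]; exact ⟨p * τ - 1, by ring⟩
    exact (Int.odd_mul.mp hodd).2
  obtain ⟨j, hj⟩ := hkodd
  refine ⟨j + 1 - τ, j + 1, ?_⟩
  have hq0 : (0:ℝ) < q := by exact_mod_cast hp.trans hpq
  have hq : (q : ℝ) ≠ 0 := by linarith
  have hp0 : (0:ℝ) < p := by exact_mod_cast hp
  have hpq' : (p : ℝ) + q ≠ 0 := by linarith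
  have hA1 : (p : ℝ) / q + 1 ≠ 0 := by
    rw [div_add_one hq]
    exact div_ne_zero hpq' hq
  have hk' : (2 * (p : ℝ) * τ - 1) = ((p : ℝ) + q) * (2 * j + 1) := by
    have := hk
    rw [hj] at this
    exact_mod_cast congrArg (Int.cast : ℤ → ℝ) this
  simp only [Tc, dT, Prod.mk_add_mk, Prod.ext_iff]
  constructor
  · push_cast
    field_simp
    ring_nf
    linear_combination (-1:ℝ) * hk'
  · push_cast
    field_simp
    ring_nf
    linear_combination ((p:ℝ)-q) * hk'
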